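/- Let p be a real number with p ≥ 3 and let i, ℓ be positive integers with p^i ≤ ℓ < p^{i+1}. Let k₁, k₂ be positive real numbers and suppose f₀, f₁, …, f_i are real numbers satisfying k₁/p^j − k₂/ℓ ≤ f_j ≤ k₁/p^j + k₂/ℓ for every j ∈ {0,…,i}. Then for any real number t with t ≥ 1, (1 − 1/p^{t+i})·f_i + Σ_{j=0}^{i−1} (1 − 1/p^{t+j})·(f_j − f_{j+1}) < (1 − 1/(p^{t−1}(p+1)))·k₁ + k₂/ℓ. -/

import Mathlib

theorem weighted_sum_upper_bound (p t k₁ k₂ : ℝ) (i ℓ : ℕ)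
    (hp : 3 ≤ p) (ht : 1 ≤ t) (hi : 0 < i) (hℓ : 0 < ℓ)
    (hℓ1 : p ^ i ≤ (ℓ : ℝ)) (hℓ2 : (ℓ : ℝ) < p ^ (i + 1))
    (hk₁ : 0 < k₁) (hk₂ : 0 < k₂)
    (f : ℕ → ℝ)
    (hf : ∀ j ≤ i, k₁ / p ^ j - k₂ / ℓ ≤ f j ∧ f j ≤ k₁ / p ^ j + k₂ / ℓ) :
    (1 - 1 / p ^ (t + (i : ℝ))) * f i
        + ∑ j ∈ Finset.range i, (1 - 1 / p ^ (t + (j : ℝ))) * (f j - f (j + 1))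
      < (1 - 1 / (p ^ (t - 1) * (p + 1))) * k₁ + k₂ / ℓ := by
  have hp0 : (0:ℝ) < p := by linarith
  have hp1 : (1:ℝ) < p := by linarith
  set q := p ^ t with hqdef
  have hq0 : 0 < q := Real.rpow_pos_of_pos hp0 t
  have hqp : p ≤ q := by
    have := Real.rpow_le_rpow_of_exponent_le hp1.le ht
    rwa [Real.rpow_one] at this
  have hq3 : (3:ℝ) ≤ q := le_trans hp hqp
  have hrw : ∀ j : ℕ, p ^ (t + (j:ℝ)) = q * p ^ j := by
    intro j
    rw [Real.rpow_add hp0, Real.rpow_natCast]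
  have hrw1 : p ^ (t - 1) = q / p := by
    rw [Real.rpow_sub hp0, Real.rpow_one]
  rw [hrw i, hrw1]
  rw [show (∑ j ∈ Finset.range i, (1 - 1 / p ^ (t + (j : ℝ))) * (f j - f (j + 1)))
      = ∑ j ∈ Finset.range i, (1 - 1 / (q * p ^ j)) * (f j - f (j + 1)) from
    Finset.sum_congr rfl (fun j _ => by rw [hrw j])]
  have hℓ0 : (0:ℝ) < (ℓ:ℝ) := by exact_mod_cast hℓ
  have hpj0 : ∀ j : ℕ, (0:ℝ) < p ^ j := fun j => pow_pos hp0 j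
  -- Abel summation identity
  have habel : ∀ n : ℕ, (1 - 1 / (q * p ^ n)) * f n
      + ∑ j ∈ Finset.range n, (1 - 1 / (q * p ^ j)) * (f j - f (j + 1))
      = (1 - 1 / q) * f 0
      + ∑ j ∈ Finset.range n, (1 / (q * p ^ j) - 1 / (q * p ^ (j + 1))) * f (j + 1) := by
    intro n
    induction n with
    | zero => simp
    | succ n ih =>
      rw [Finset.sum_range_succ, Finset.sum_range_succ]
      linear_combination ih
  rw [habel i]
  -- nonnegativity of the increments
  have hΔ : ∀ j : ℕ, (0:ℝ) ≤ 1 / (q * p ^ j) - 1 / (q * p ^ (j + 1)) := by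
    intro j
    have h1 : (0:ℝ) < q * p ^ j := mul_pos hq0 (hpj0 j)
    have h2 : q * p ^ j ≤ q * p ^ (j + 1) :=
      mul_le_mul_of_nonneg_left (pow_le_pow_right₀ hp1.le (Nat.le_succ j)) hq0.le
    have := one_div_le_one_div_of_le h1 h2
    linarith
  -- closed form of the geometric-type sum
  have hsum : ∀ n : ℕ, ∑ j ∈ Finset.range n,
      (1 / (q * p ^ j) - 1 / (q * p ^ (j + 1))) * (k₁ / p ^ (j + 1) + k₂ / ℓ)
      = k₁ / (q * (p + 1)) * (1 - 1 / (p ^ n) ^ 2) + k₂ / ℓ * (1 / q - 1 / (q * p ^ n)) := by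
    intro n
    induction n with
    | zero => simp
    | succ n ih =>
      rw [Finset.sum_range_succ, ih, pow_succ]
      have hpn := (hpj0 n).ne'
      have hp0' := hp0.ne'
      have hq0' := hq0.ne'
      have hℓ0' := hℓ0.ne'
      have hp1' : p + 1 ≠ 0 := by positivity
      field_simp
      ring
  -- bound the sum termwise
  have hbound : ∑ j ∈ Finset.range i, (1 / (q * p ^ j) - 1 / (q * p ^ (j + 1))) * f (j + 1)
      ≤ ∑ j ∈ Finset.range i,
        (1 / (q * p ^ j) - 1 / (q * p ^ (j + 1))) * (k₁ / p ^ (j + 1) + k₂ / ℓ) := by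
    apply Finset.sum_le_sum
    intro j hj
    have hj' : j + 1 ≤ i := Finset.mem_range.mp hj
    exact mul_le_mul_of_nonneg_left ((hf (j + 1) hj').2) (hΔ j)
  have hf0 : f 0 ≤ k₁ + k₂ / ℓ := by
    have := (hf 0 (Nat.zero_le i)).2
    simpa using this
  have hw0 : (0:ℝ) ≤ 1 - 1 / q := by
    have : 1 / q ≤ 1 / 1 := one_div_le_one_div_of_le one_pos (by linarith)
    simpa using this
  have h1 : (1 - 1 / q) * f 0 ≤ (1 - 1 / q) * (k₁ + k₂ / ℓ) :=
    mul_le_mul_of_nonneg_left hf0 hw0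
  rw [hsum i] at hbound
  -- final arithmetic
  have hk2l : (0:ℝ) < k₂ / ℓ := div_pos hk₂ hℓ0
  have hpi : (0:ℝ) < 1 / (q * p ^ i) := by positivity
  have hsq : (0:ℝ) ≤ 1 / (p ^ i) ^ 2 := by positivity
  have hk1q : (0:ℝ) < k₁ / (q * (p + 1)) := by positivity
  have key : (1 - 1 / q) * (k₁ + k₂ / ℓ)
      + (k₁ / (q * (p + 1)) * (1 - 1 / (p ^ i) ^ 2) + k₂ / ℓ * (1 / q - 1 / (q * p ^ i)))
      < (1 - 1 / (q / p * (p + 1))) * k₁ + k₂ / ℓ := by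
    have he : 1 - 1 / q + 1 / (q * (p + 1)) = 1 - 1 / (q / p * (p + 1)) := by
      field_simp
      ring
    have e1 : (1 - 1 / q) * (k₁ + k₂ / ℓ)
        + (k₁ / (q * (p + 1)) * (1 - 1 / (p ^ i) ^ 2) + k₂ / ℓ * (1 / q - 1 / (q * p ^ i)))
        = (1 - 1 / q + 1 / (q * (p + 1))) * k₁ + k₂ / ℓ
          - (k₁ / (q * (p + 1)) * (1 / (p ^ i) ^ 2) + k₂ / ℓ * (1 / (q * p ^ i))) := by
      ring
    rw [e1, he]
    linarith [mul_pos hk2l hpi, mul_nonneg hk1q.le hsq]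
  linarith
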